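/- Let L ∈ ℂ^{N×N} be a Hermitian negative definite matrix and let τ > 0 be real. Then I − exp(τL) is invertible, and the matrix G = τ·( L·(I − exp(τL))⁻¹ − L ) is Hermitian and negative definite, i.e. x*Gx < 0 for every nonzero x ∈ ℂ^N. -/

import Mathlib

open scoped Matrix

-- scalar inequality: for s < 0, s/(1-e^s) - s < 0
lemma g_neg {s : ℝ} (hs : s < 0) : s * (1 - Real.exp s)⁻¹ - s < 0 := by
  have h1 : Real.exp s < 1 := Real.exp_lt_one_iff.mpr hs
  have h2 : 0 < 1 - Real.exp s := by linarith
  have h3 : 0 < Real.exp s := Real.exp_pos s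
  rw [sub_neg, mul_inv_lt_iff₀ h2]
  nlinarith

theorem etd_g_negDef (N : ℕ) (L : Matrix (Fin N) (Fin N) ℂ)
    (hherm : L.IsHermitian)
    (hneg : ∀ x : Fin N → ℂ, x ≠ 0 → (star x ⬝ᵥ L.mulVec x).re < 0)
    (τ : ℝ) (hτ : 0 < τ) :
    IsUnit ((1 : Matrix (Fin N) (Fin N) ℂ) - NormedSpace.exp ((τ : ℂ) • L)) ∧
      ((τ : ℂ) • (L * ((1 : Matrix (Fin N) (Fin N) ℂ) - NormedSpace.exp ((τ : ℂ) • L))⁻¹ - L)).IsHermitian ∧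
      ∀ x : Fin N → ℂ, x ≠ 0 →
        (star x ⬝ᵥ ((τ : ℂ) • (L * ((1 : Matrix (Fin N) (Fin N) ℂ) - NormedSpace.exp ((τ : ℂ) • L))⁻¹ - L)).mulVec x).re < 0 := by
  classical
  set U : Matrix (Fin N) (Fin N) ℂ := (hherm.eigenvectorUnitary : Matrix (Fin N) (Fin N) ℂ) with hUdef
  have hU1 : U * star U = 1 := (Matrix.mem_unitaryGroup_iff).mp hherm.eigenvectorUnitary.2
  have hU2 : star U * U = 1 := (Matrix.mem_unitaryGroup_iff').mp hherm.eigenvectorUnitary.2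
  have hUinv : U⁻¹ = star U := Matrix.inv_eq_right_inv hU1
  have hUunit : IsUnit U := Matrix.isUnit_iff_isUnit_det U |>.mpr
    (Matrix.isUnit_det_of_right_inverse hU1)
  set μ : Fin N → ℝ := hherm.eigenvalues with hμdef
  -- eigenvalues are negative
  have hμneg : ∀ i, μ i < 0 := by
    intro i
    have hv := hherm.mulVec_eigenvectorBasis i
    set v : Fin N → ℂ := ⇑(hherm.eigenvectorBasis i) with hvdef
    have hvne : v ≠ 0 := by
      intro h
      have := hherm.eigenvectorBasis.orthonormal.1 i
      rw [show hherm.eigenvectorBasis i = 0 from by ext j; exact congrFun h j] at this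
      simp at this
    have hq := hneg v hvne
    have : star v ⬝ᵥ L.mulVec v = (μ i : ℂ) * (star v ⬝ᵥ v) := by
      rw [hv]; simp [dotProduct_smul, Complex.real_smul, dotProduct]
      ring_nf
      simp [Finset.mul_sum]
      congr 1; ext j; ring
    have hvv : star v ⬝ᵥ v = (∑ j, Complex.normSq (v j) : ℝ) := by
      simp [dotProduct, Complex.mul_conj']
      push_cast
      congr 1; ext j; rw [mul_comm, Complex.mul_conj]
    rw [this, hvv] at hq
    have hsum : 0 < ∑ j, Complex.normSq (v j) := by
      have : ∃ j, v j ≠ 0 := by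
        by_contra h; push_neg at h; exact hvne (funext h)
      obtain ⟨j, hj⟩ := this
      exact Finset.sum_pos' (fun k _ => Complex.normSq_nonneg _)
        ⟨j, Finset.mem_univ j, Complex.normSq_pos.mpr hj⟩
    have : ((μ i : ℂ) * ((∑ j, Complex.normSq (v j) : ℝ) : ℂ)).re
        = μ i * ∑ j, Complex.normSq (v j) := by
      push_cast; simp [Complex.mul_re]
    rw [this] at hq
    nlinarith
  -- spectral decomposition
  have hspec : L = U * Matrix.diagonal (fun i => (μ i : ℂ)) * star U := by
    have := hherm.spectral_theorem
    rw [Unitary.conjStarAlgAut_apply] at this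
    exact this
  set s : Fin N → ℝ := fun i => τ * μ i with hsdef
  have hsneg : ∀ i, s i < 0 := fun i => mul_neg_of_pos_of_neg hτ (hμneg i)
  have hτL : (τ:ℂ) • L = U * Matrix.diagonal (fun i => ((s i : ℝ) : ℂ)) * star U := by
    have hds : Matrix.diagonal (fun i => ((s i : ℝ) : ℂ)) = (τ:ℂ) • Matrix.diagonal (fun i => ((μ i : ℝ) : ℂ)) := by
      ext i j
      by_cases h : i = j
      · subst h
        simp [Matrix.diagonal_apply_eq, Matrix.smul_apply, hsdef]
      · simp [Matrix.diagonal_apply_ne _ h, Matrix.smul_apply]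
    rw [hspec, hds, mul_smul_comm, smul_mul_assoc]
  have hexp : NormedSpace.exp ((τ:ℂ) • L)
      = U * Matrix.diagonal (fun i => Complex.exp (s i)) * star U := by
    rw [hτL, ← hUinv, Matrix.exp_conj U _ hUunit, Matrix.exp_diagonal, hUinv]
    congr 2
    rw [Pi.exp_def]
    ext i
    rw [← Complex.exp_eq_exp_ℂ]
  set d : Fin N → ℂ := fun i => 1 - Complex.exp (s i) with hddef
  have hd : ∀ i, d i = ((1 - Real.exp (s i) : ℝ) : ℂ) := by
    intro i; simp [hddef, Complex.ofReal_exp]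
  have hdRpos : ∀ i, 0 < 1 - Real.exp (s i) := by
    intro i
    have := Real.exp_lt_one_iff.mpr (hsneg i)
    linarith
  have hdne : ∀ i, d i ≠ 0 := by
    intro i
    rw [hd i]
    exact_mod_cast (ne_of_gt (hdRpos i))
  have hM : (1 : Matrix (Fin N) (Fin N) ℂ) - NormedSpace.exp ((τ:ℂ) • L)
      = U * Matrix.diagonal d * star U := by
    rw [hexp]
    have h1 : (1 : Matrix (Fin N) (Fin N) ℂ) = U * Matrix.diagonal (fun _ => (1:ℂ)) * star U := by
      rw [Matrix.diagonal_one, mul_one, hU1]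
    rw [h1, ← Matrix.sub_mul, ← Matrix.mul_sub, Matrix.diagonal_sub]
  have hmulinv : (U * Matrix.diagonal d * star U) * (U * Matrix.diagonal (fun i => (d i)⁻¹) * star U) = 1 := by
    calc (U * Matrix.diagonal d * star U) * (U * Matrix.diagonal (fun i => (d i)⁻¹) * star U)
        = U * Matrix.diagonal d * (star U * U) * Matrix.diagonal (fun i => (d i)⁻¹) * star U := by
          simp only [Matrix.mul_assoc]
      _ = 1 := by
          rw [hU2, mul_one, mul_assoc U, Matrix.diagonal_mul_diagonal]
          have : (fun i => d i * (d i)⁻¹) = fun _ => (1:ℂ) := by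
            ext i; exact mul_inv_cancel₀ (hdne i)
          rw [this, Matrix.diagonal_one, mul_one, hU1]
  have hMunit : IsUnit ((1 : Matrix (Fin N) (Fin N) ℂ) - NormedSpace.exp ((τ:ℂ) • L)) := by
    rw [hM]
    exact Matrix.isUnit_iff_isUnit_det _ |>.mpr (Matrix.isUnit_det_of_right_inverse hmulinv)
  have hMinv : ((1 : Matrix (Fin N) (Fin N) ℂ) - NormedSpace.exp ((τ:ℂ) • L))⁻¹
      = U * Matrix.diagonal (fun i => (d i)⁻¹) * star U := by
    rw [hM]
    exact Matrix.inv_eq_right_inv hmulinv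
  -- the matrix G as a conjugated diagonal
  set r : Fin N → ℝ := fun i => τ * (μ i * (1 - Real.exp (s i))⁻¹ - μ i) with hrdef
  have hG : (τ : ℂ) • (L * ((1 : Matrix (Fin N) (Fin N) ℂ) - NormedSpace.exp ((τ : ℂ) • L))⁻¹ - L)
      = U * Matrix.diagonal (fun i => ((r i : ℝ) : ℂ)) * star U := by
    rw [hMinv, hspec]
    have hLM : (U * Matrix.diagonal (fun i => (μ i : ℂ)) * star U) * (U * Matrix.diagonal (fun i => (d i)⁻¹) * star U)
        = U * Matrix.diagonal (fun i => (μ i : ℂ) * (d i)⁻¹) * star U := by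
      calc (U * Matrix.diagonal (fun i => (μ i : ℂ)) * star U) * (U * Matrix.diagonal (fun i => (d i)⁻¹) * star U)
          = U * Matrix.diagonal (fun i => (μ i : ℂ)) * (star U * U) * Matrix.diagonal (fun i => (d i)⁻¹) * star U := by
            noncomm_ring
        _ = _ := by rw [hU2, mul_one, mul_assoc U, Matrix.diagonal_mul_diagonal]
    rw [hLM, ← Matrix.sub_mul, ← Matrix.mul_sub, Matrix.diagonal_sub,
      ← smul_mul_assoc, ← mul_smul_comm, ← Matrix.diagonal_smul]
    have hfun : ((τ:ℂ) • fun i => ((μ i : ℝ) : ℂ) * (d i)⁻¹ - ((μ i : ℝ) : ℂ))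
        = fun i => ((r i : ℝ) : ℂ) := by
      funext i
      simp only [Pi.smul_apply, smul_eq_mul, hrdef, hd i]
      push_cast
      ring
    rw [hfun]
  have hrneg : ∀ i, r i < 0 := by
    intro i
    have h := g_neg (hsneg i)
    have : r i = s i * (1 - Real.exp (s i))⁻¹ - s i := by
      simp only [hrdef, hsdef]; ring
    rw [this]
    exact h
  refine ⟨hMunit, ?_, ?_⟩
  · rw [hG]
    unfold Matrix.IsHermitian
    rw [Matrix.conjTranspose_mul, Matrix.conjTranspose_mul, Matrix.diagonal_conjTranspose]
    have : star (fun i => ((r i : ℝ) : ℂ)) = fun i => ((r i : ℝ) : ℂ) := by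
      ext i; simp [Pi.star_apply, Complex.star_def, Complex.conj_ofReal]
    rw [this, Matrix.star_eq_conjTranspose, Matrix.conjTranspose_conjTranspose, mul_assoc]
  · intro x hx
    rw [hG]
    set y : Fin N → ℂ := star U *ᵥ x with hydef
    have hyx : U *ᵥ y = x := by
      rw [hydef, Matrix.mulVec_mulVec, hU1, Matrix.one_mulVec]
    have hyne : y ≠ 0 := by
      intro h
      apply hx
      rw [← hyx, h, Matrix.mulVec_zero]
    have hmv : (U * Matrix.diagonal (fun i => ((r i : ℝ) : ℂ)) * star U) *ᵥ x
        = U *ᵥ (Matrix.diagonal (fun i => ((r i : ℝ) : ℂ)) *ᵥ y) := by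
      rw [hydef, Matrix.mulVec_mulVec, Matrix.mulVec_mulVec]
    rw [hmv, Matrix.dotProduct_mulVec]
    have hstar : star x ᵥ* U = star y := by
      rw [hydef, Matrix.star_mulVec, Matrix.star_eq_conjTranspose, Matrix.conjTranspose_conjTranspose]
    rw [hstar]
    have : star y ⬝ᵥ Matrix.diagonal (fun i => ((r i : ℝ) : ℂ)) *ᵥ y
        = ((∑ i, r i * Complex.normSq (y i) : ℝ) : ℂ) := by
      simp only [dotProduct, Matrix.mulVec_diagonal, Pi.star_apply]
      push_cast
      congr 1
      ext i
      rw [Complex.star_def]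
      calc (starRingEnd ℂ) (y i) * ((r i : ℂ) * y i)
          = (r i : ℂ) * (y i * (starRingEnd ℂ) (y i)) := by ring
        _ = (r i : ℂ) * ((Complex.normSq (y i) : ℝ) : ℂ) := by rw [Complex.mul_conj]
    rw [this, Complex.ofReal_re]
    have hex : ∃ j, y j ≠ 0 := by
      by_contra h; push_neg at h; exact hyne (funext h)
    obtain ⟨j, hj⟩ := hex
    have hlt : ∑ i, r i * Complex.normSq (y i) < ∑ i : Fin N, (0:ℝ) := by
      apply Finset.sum_lt_sum
      · intro i _
        exact mul_nonpos_of_nonpos_of_nonneg (le_of_lt (hrneg i)) (Complex.normSq_nonneg _)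
      · exact ⟨j, Finset.mem_univ j, mul_neg_of_neg_of_pos (hrneg j) (Complex.normSq_pos.mpr hj)⟩
    simpa using hlt
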